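/- arXiv:1803.09925 — 6 statements merged into one kernel-verified Lean document; each statement's English description precedes it below -/
import Mathlib

section
/- Let L be a lattice with least element 0, and let a be an atom of L that is also a neutral element. Then an element x ∈ L is cancellable if and only if x ⊔ a is cancellable. -/
section Aux

variable {L : Type*} [Lattice L] [OrderBot L] {a : L}

/-- A neutral element is cancellable. -/
lemma aux_neutral_cancel
    (hn : ∀ y z : L, (a ⊔ y) ⊓ (y ⊔ z) ⊓ (z ⊔ a) = (a ⊓ y) ⊔ (y ⊓ z) ⊔ (z ⊓ a))
    {y z : L} (h1 : a ⊔ y = a ⊔ z) (h2 : a ⊓ y = a ⊓ z) : y = z := by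
  have key : ∀ u v : L, a ⊔ u = a ⊔ v → a ⊓ u = a ⊓ v → u ≤ v := by
    intro u v e1 e2
    have hle : u ≤ (a ⊔ u) ⊓ (u ⊔ v) ⊓ (v ⊔ a) := by
      refine le_inf (le_inf le_sup_right le_sup_left) ?_
      calc u ≤ a ⊔ u := le_sup_right
        _ = a ⊔ v := e1
        _ = v ⊔ a := sup_comm ..
    rw [hn u v] at hle
    refine hle.trans (sup_le (sup_le ?_ inf_le_right) inf_le_left)
    rw [e2]; exact inf_le_right
  exact le_antisymm (key y z h1 h2) (key z y h1.symm h2.symm)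

/-- Distributivity of a neutral atom: `(u ⊔ a) ⊓ v = (u ⊓ v) ⊔ (a ⊓ v)`. -/
lemma aux_neutral_dist (hatom : IsAtom a)
    (hn : ∀ y z : L, (a ⊔ y) ⊓ (y ⊔ z) ⊓ (z ⊔ a) = (a ⊓ y) ⊔ (y ⊓ z) ⊔ (z ⊓ a))
    (u v : L) : (u ⊔ a) ⊓ v = (u ⊓ v) ⊔ (a ⊓ v) := by
  rcases hatom.le_iff.mp (inf_le_left : a ⊓ v ≤ a) with h | h
  · -- a ⊓ v = ⊥
    rw [h, sup_bot_eq]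
    refine le_antisymm ?_ (inf_le_inf_right v le_sup_left)
    have h1 : (u ⊔ a) ⊓ v ≤ (a ⊔ u) ⊓ (u ⊔ v) ⊓ (v ⊔ a) :=
      le_inf (le_inf (by rw [sup_comm]; exact inf_le_left)
        (inf_le_right.trans le_sup_right)) (inf_le_right.trans le_sup_left)
    rw [hn u v] at h1
    refine le_inf (h1.trans ?_) inf_le_right
    have hva : v ⊓ a = ⊥ := by rw [inf_comm]; exact h
    rw [hva, sup_bot_eq]
    exact sup_le inf_le_right inf_le_left
  · -- a ⊓ v = a, i.e. a ≤ v
    have hav : a ≤ v := h ▸ inf_le_right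
    have hm := hn u v
    rw [sup_eq_left.mpr hav] at hm
    have hl : (a ⊔ u) ⊓ (u ⊔ v) ⊓ v = (u ⊔ a) ⊓ v := by
      rw [inf_assoc, inf_eq_right.mpr (le_sup_right : v ≤ u ⊔ v), sup_comm]
    have hr : (a ⊓ u) ⊔ (u ⊓ v) ⊔ (v ⊓ a) = (u ⊓ v) ⊔ (a ⊓ v) := by
      rw [inf_comm v a, h]
      exact le_antisymm
        (sup_le (sup_le (inf_le_left.trans le_sup_right) le_sup_left) le_sup_right)
        (sup_le (le_sup_right.trans le_sup_left) le_sup_right)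
    rw [hl, hr] at hm
    exact hm

/-- If `a` is a neutral atom, `a ≤ u ⊔ v` and `a ⊓ v = ⊥`, then `a ≤ u`. -/
lemma aux_neutral_atom_le
    (hn : ∀ y z : L, (a ⊔ y) ⊓ (y ⊔ z) ⊓ (z ⊔ a) = (a ⊓ y) ⊔ (y ⊓ z) ⊔ (z ⊓ a))
    {u v : L} (hle : a ≤ u ⊔ v) (hv : a ⊓ v = ⊥) : a ≤ u := by
  have h1 : a ≤ (a ⊔ u) ⊓ (u ⊔ v) ⊓ (v ⊔ a) :=
    le_inf (le_inf le_sup_left hle) le_sup_right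
  rw [hn u v] at h1
  refine h1.trans (sup_le (sup_le inf_le_right inf_le_left) ?_)
  rw [inf_comm, hv]
  exact bot_le

end Aux

/-- Let `L` be a lattice with least element `0` and `a` an atom of `L` that is also
a neutral element.  Then `x` is cancellable iff `x ⊔ a` is cancellable. -/
theorem cancellable_iff_join_atom {L : Type*} [Lattice L] [OrderBot L] (a : L)
    (hatom : IsAtom a)
    (hneutral : ∀ y z : L,
      (a ⊔ y) ⊓ (y ⊔ z) ⊓ (z ⊔ a) = (a ⊓ y) ⊔ (y ⊓ z) ⊔ (z ⊓ a))
    (x : L) :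
    (∀ y z : L, x ⊔ y = x ⊔ z → x ⊓ y = x ⊓ z → y = z) ↔
      (∀ y z : L, (x ⊔ a) ⊔ y = (x ⊔ a) ⊔ z → (x ⊔ a) ⊓ y = (x ⊔ a) ⊓ z → y = z) := by
  have atom_cases : ∀ w : L, a ⊓ w = ⊥ ∨ a ⊓ w = a := fun w =>
    hatom.le_iff.mp (inf_le_left : a ⊓ w ≤ a)
  constructor
  · -- x cancellable → x ⊔ a cancellable
    intro hx y z h1 h2
    rw [aux_neutral_dist hatom hneutral x y, aux_neutral_dist hatom hneutral x z] at h2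
    -- First show x ⊓ y = x ⊓ z and a ⊓ y = a ⊓ z
    have key : x ⊓ y = x ⊓ z ∧ a ⊓ y = a ⊓ z := by
      rcases atom_cases y with hy | hy <;> rcases atom_cases z with hz | hz
      · rw [hy, hz, sup_bot_eq, sup_bot_eq] at h2
        exact ⟨h2, hy.trans hz.symm⟩
      · -- a ⊓ y = ⊥, a ⊓ z = a : contradiction
        exfalso
        rw [hy, hz, sup_bot_eq] at h2
        have haz : a ≤ y := (le_sup_right.trans h2.ge).trans inf_le_right
        have : a ⊓ y = a := inf_eq_left.mpr haz
        rw [hy] at this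
        exact hatom.1 this.symm
      · exfalso
        rw [hy, hz, sup_bot_eq] at h2
        have haz : a ≤ z := (le_sup_right.trans h2.le).trans inf_le_right
        have : a ⊓ z = a := inf_eq_left.mpr haz
        rw [hz] at this
        exact hatom.1 this.symm
      · -- a ≤ y and a ≤ z
        rw [hy, hz] at h2
        have hay : a ≤ y := hy ▸ inf_le_right
        have haz : a ≤ z := hz ▸ inf_le_right
        have hinfa : a ⊓ (x ⊓ y) = a ⊓ (x ⊓ z) := by
          rw [inf_left_comm, inf_eq_left.mpr hay, inf_left_comm a x z,
            inf_eq_left.mpr haz]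
        have := aux_neutral_cancel hneutral
          (by rw [sup_comm a (x ⊓ y), sup_comm a (x ⊓ z)]; exact h2) hinfa
        exact ⟨this, hy.trans hz.symm⟩
    obtain ⟨hxyz, hayz⟩ := key
    -- cancel x on the pair (y ⊔ a, z ⊔ a)
    have hsup : x ⊔ (y ⊔ a) = x ⊔ (z ⊔ a) := by
      rw [← sup_assoc, ← sup_assoc]
      calc x ⊔ y ⊔ a = x ⊔ a ⊔ y := by rw [sup_right_comm]
        _ = x ⊔ a ⊔ z := h1
        _ = x ⊔ z ⊔ a := by rw [sup_right_comm]
    have hinf : x ⊓ (y ⊔ a) = x ⊓ (z ⊔ a) := by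
      rw [inf_comm x (y ⊔ a), inf_comm x (z ⊔ a),
        aux_neutral_dist hatom hneutral y x, aux_neutral_dist hatom hneutral z x,
        inf_comm y x, inf_comm z x, hxyz]
    have hya : y ⊔ a = z ⊔ a := hx _ _ hsup hinf
    exact aux_neutral_cancel hneutral
      (by rw [sup_comm a y, sup_comm a z]; exact hya) hayz
  · -- x ⊔ a cancellable → x cancellable
    intro hxa y z h1 h2
    have hayz : a ⊓ y = a ⊓ z := by
      rcases atom_cases y with hy | hy <;> rcases atom_cases z with hz | hz
      · exact hy.trans hz.symm
      · exfalso
        have haz : a ≤ z := hz ▸ inf_le_right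
        have h' : a ≤ x ⊔ y := h1 ▸ (haz.trans le_sup_right)
        have hax : a ≤ x := aux_neutral_atom_le hneutral h' hy
        have hayy : a ≤ y := (le_inf hax haz).trans (h2.symm ▸ inf_le_right)
        exact hatom.1 ((inf_eq_left.mpr hayy).symm.trans hy)
      · exfalso
        have hay : a ≤ y := hy ▸ inf_le_right
        have h' : a ≤ x ⊔ z := h1 ▸ (hay.trans le_sup_right)
        have hax : a ≤ x := aux_neutral_atom_le hneutral h' hz
        have hazz : a ≤ z := (le_inf hax hay).trans (h2 ▸ inf_le_right)
        exact hatom.1 ((inf_eq_left.mpr hazz).symm.trans hz)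
      · exact hy.trans hz.symm
    apply hxa y z
    · rw [sup_right_comm, h1, sup_right_comm]
    · rw [aux_neutral_dist hatom hneutral x y, aux_neutral_dist hatom hneutral x z,
        h2, hayz]
end

section
/- Let L be a lattice with least element 0, a an atom and neutral element of L, and x ∈ L. If for all y, z ∈ L the equalities x ⊔ (y ⊔ a) = x ⊔ (z ⊔ a) and x ⊓ (y ⊔ a) = x ⊓ (z ⊔ a) imply y ⊔ a = z ⊔ a, then x is a cancellable element of L. -/
/-- If joins/meets of `x` with elements of the form `y ⊔ a` (where `a` is a neutral atom)
determine `y ⊔ a`, then `x` is cancellable. -/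
theorem cancellable_of_cancel_over_atom {L : Type*} [Lattice L] [OrderBot L] (a : L)
    (hatom : IsAtom a)
    (hneutral : ∀ y z : L,
      (a ⊔ y) ⊓ (y ⊔ z) ⊓ (z ⊔ a) = (a ⊓ y) ⊔ (y ⊓ z) ⊔ (z ⊓ a))
    (x : L)
    (h : ∀ y z : L, x ⊔ (y ⊔ a) = x ⊔ (z ⊔ a) → x ⊓ (y ⊔ a) = x ⊓ (z ⊔ a) →
      y ⊔ a = z ⊔ a) :
    ∀ y z : L, x ⊔ y = x ⊔ z → x ⊓ y = x ⊓ z → y = z := by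
  -- a is cancellable (standard consequence of the median identity)
  have key : ∀ p q : L, a ⊔ p = a ⊔ q → a ⊓ p = a ⊓ q → p ≤ q := by
    intro p q hj hm
    calc p ≤ (a ⊔ p) ⊓ (p ⊔ q) ⊓ (q ⊔ a) := by
            refine le_inf (le_inf le_sup_right le_sup_left) ?_
            rw [sup_comm q a, ← hj]; exact le_sup_right
      _ = (a ⊓ p) ⊔ (p ⊓ q) ⊔ (q ⊓ a) := hneutral p q
      _ ≤ q := sup_le (sup_le (hm ▸ inf_le_right) inf_le_right) inf_le_left
  have acancel : ∀ p q : L, a ⊔ p = a ⊔ q → a ⊓ p = a ⊓ q → p = q := fun p q hj hm =>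
    le_antisymm (key p q hj hm) (key q p hj.symm hm.symm)
  -- atom dichotomy
  have dich : ∀ t : L, a ⊓ t = ⊥ ∨ a ≤ t := by
    intro t
    rcases (inf_le_left : a ⊓ t ≤ a).lt_or_eq with hlt | heq
    · exact Or.inl (hatom.2 _ hlt)
    · exact Or.inr (inf_eq_left.mp heq)
  intro y z hj hm
  have hja : x ⊔ (y ⊔ a) = x ⊔ (z ⊔ a) := by
    rw [← sup_assoc, ← sup_assoc, hj]
  rcases dich x with hx | hx
  · -- a ⊓ x = ⊥
    rcases dich y with hy | hy <;> rcases dich z with hz | hz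
    · -- a ⊓ y = ⊥, a ⊓ z = ⊥
      have meetlem : ∀ t : L, a ⊓ t = ⊥ → x ⊓ (t ⊔ a) = x ⊓ t := by
        intro t ht
        refine le_antisymm ?_ (le_inf inf_le_left (le_trans inf_le_right le_sup_left))
        calc x ⊓ (t ⊔ a) ≤ (a ⊔ t) ⊓ (t ⊔ x) ⊓ (x ⊔ a) := by
              refine le_inf (le_inf ?_ ?_) ?_
              · exact le_trans inf_le_right (sup_comm t a ▸ le_rfl)
              · exact le_trans inf_le_left le_sup_right
              · exact le_trans inf_le_left le_sup_left
          _ = (a ⊓ t) ⊔ (t ⊓ x) ⊔ (x ⊓ a) := hneutral t x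
          _ ≤ x ⊓ t := by
              rw [ht, inf_comm x a, hx]
              simp [inf_comm]
      have hma : x ⊓ (y ⊔ a) = x ⊓ (z ⊔ a) := by
        rw [meetlem y hy, meetlem z hz, hm]
      have hs := h y z hja hma
      exact acancel y z (by rw [sup_comm a y, sup_comm a z, hs])
        (by rw [hy, hz])
    · -- a ⊓ y = ⊥, a ≤ z : contradiction
      exfalso
      have haxz : a ≤ x ⊔ y := le_trans hz (hj ▸ le_sup_right)
      have : a ≤ (a ⊔ x) ⊓ (x ⊔ y) ⊓ (y ⊔ a) :=
        le_inf (le_inf le_sup_left haxz) le_sup_right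
      rw [hneutral x y] at this
      have : a ≤ x ⊓ y := by
        have h2 : (a ⊓ x) ⊔ (x ⊓ y) ⊔ (y ⊓ a) ≤ x ⊓ y := by
          rw [hx, inf_comm y a, hy]; simp
        exact le_trans this h2
      have : a ⊓ y = a := inf_eq_left.mpr (le_trans this inf_le_right)
      exact hatom.1 (by rw [← hy, this])
    · -- a ≤ y, a ⊓ z = ⊥ : contradiction (symmetric)
      exfalso
      have haxz : a ≤ x ⊔ z := le_trans hy (hj ▸ le_sup_right)
      have : a ≤ (a ⊔ x) ⊓ (x ⊔ z) ⊓ (z ⊔ a) :=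
        le_inf (le_inf le_sup_left haxz) le_sup_right
      rw [hneutral x z] at this
      have : a ≤ x ⊓ z := by
        have h2 : (a ⊓ x) ⊔ (x ⊓ z) ⊔ (z ⊓ a) ≤ x ⊓ z := by
          rw [hx, inf_comm z a, hz]; simp
        exact le_trans this h2
      have : a ⊓ z = a := inf_eq_left.mpr (le_trans this inf_le_right)
      exact hatom.1 (by rw [← hz, this])
    · -- a ≤ y, a ≤ z
      have h1 : y ⊔ a = y := sup_eq_left.mpr hy
      have h2 : z ⊔ a = z := sup_eq_left.mpr hz
      have := h y z hja (by rw [h1, h2, hm])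
      rwa [h1, h2] at this
  · -- a ≤ x
    have meetlem : ∀ t : L, x ⊓ (t ⊔ a) = a ⊔ (x ⊓ t) := by
      intro t
      have hax : a ⊔ x = x := sup_eq_right.mpr hx
      calc x ⊓ (t ⊔ a) = (a ⊔ x) ⊓ (x ⊔ t) ⊓ (t ⊔ a) := by
            rw [hax, inf_sup_self]
        _ = (a ⊓ x) ⊔ (x ⊓ t) ⊔ (t ⊓ a) := hneutral x t
        _ = a ⊔ (x ⊓ t) := by
            rw [inf_eq_left.mpr hx, sup_assoc, sup_comm (x ⊓ t), ← sup_assoc,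
              sup_eq_left.mpr (inf_le_right : t ⊓ a ≤ a)]
    have hma : x ⊓ (y ⊔ a) = x ⊓ (z ⊔ a) := by
      rw [meetlem y, meetlem z, hm]
    have hs := h y z hja hma
    have hinf : a ⊓ y = a ⊓ z := by
      have h1 : a ⊓ y = a ⊓ (x ⊓ y) := by
        rw [← inf_assoc, inf_eq_left.mpr hx]
      have h2 : a ⊓ z = a ⊓ (x ⊓ z) := by
        rw [← inf_assoc, inf_eq_left.mpr hx]
      rw [h1, h2, hm]
    exact acancel y z (by rw [sup_comm a y, sup_comm a z, hs]) hinf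
end

section
/- Let x be a modular element of a lattice L that is not cancellable, and let y, z be distinct elements of L with x ⊔ y = x ⊔ z and x ⊓ y = x ⊓ z. Then there exists x' ∈ L with x' ≤ x, x' ⊔ y = x' ⊔ z, x' ⊓ y = x' ⊓ z, and y ⊔ z = x' ⊔ y. -/
/-- For a modular non-cancellable element `x` and distinct `y, z` witnessing
non-cancellability, there is `x' ≤ x` with `x' ⊔ y = x' ⊔ z`, `x' ⊓ y = x' ⊓ z`
and `y ⊔ z = x' ⊔ y`. -/
theorem modular_non_cancellable {L : Type*} [Lattice L] (x : L)
    (hmod : ∀ y z : L, y ≤ z → (x ⊔ y) ⊓ z = (x ⊓ z) ⊔ y)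
    (hnotcanc : ¬ (∀ y z : L, x ⊔ y = x ⊔ z → x ⊓ y = x ⊓ z → y = z))
    (y z : L) (hyz : y ≠ z) (hj : x ⊔ y = x ⊔ z) (hm : x ⊓ y = x ⊓ z) :
    ∃ x' : L, x' ≤ x ∧ x' ⊔ y = x' ⊔ z ∧ x' ⊓ y = x' ⊓ z ∧ y ⊔ z = x' ⊔ y := by
  refine ⟨x ⊓ (y ⊔ z), inf_le_left, ?_, ?_, ?_⟩
  · have h1 := hmod y (y ⊔ z) le_sup_left
    have h2 := hmod z (y ⊔ z) le_sup_right
    have hy : y ⊔ z ≤ x ⊔ y := sup_le le_sup_right (hj ▸ le_sup_right)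
    have hz : y ⊔ z ≤ x ⊔ z := hj ▸ hy
    rw [inf_eq_right.mpr hy] at h1
    rw [inf_eq_right.mpr hz] at h2
    rw [← h1, ← h2]
  · have : x ⊓ (y ⊔ z) ⊓ y = x ⊓ y := by
      rw [inf_assoc, inf_eq_right.mpr (le_sup_left : y ≤ y ⊔ z)]
    have hz' : x ⊓ (y ⊔ z) ⊓ z = x ⊓ z := by
      rw [inf_assoc, inf_eq_right.mpr (le_sup_right : z ≤ y ⊔ z)]
    rw [this, hz', hm]
  · have h1 := hmod y (y ⊔ z) le_sup_left
    have hy : y ⊔ z ≤ x ⊔ y := sup_le le_sup_right (hj ▸ le_sup_right)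
    rw [inf_eq_right.mpr hy] at h1
    exact h1
end

section
/- Let L be a lattice with least element 0 and let a be an atom of L that is a neutral element. Suppose y, z ∈ L both satisfy a ≤ y and a ≤ z (i.e., y = y ⊔ a and z = z ⊔ a). If x ∈ L is such that x ⊔ y = x ⊔ z and x ⊓ y = x ⊓ z imply y = z for all such y, z lying above a, and x ⊔ a is cancellable, then x is cancellable. -/
/-- If `a` is a neutral atom, `x` cancels among elements lying above `a`,
and `x ⊔ a` is cancellable, then `x` is cancellable. -/
theorem cancellable_of_cancel_above_atom {L : Type*} [Lattice L] [OrderBot L] (a : L)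
    (hatom : IsAtom a)
    (hneutral : ∀ y z : L,
      (a ⊔ y) ⊓ (y ⊔ z) ⊓ (z ⊔ a) = (a ⊓ y) ⊔ (y ⊓ z) ⊔ (z ⊓ a))
    (x : L)
    (habove : ∀ y z : L, a ≤ y → a ≤ z → x ⊔ y = x ⊔ z → x ⊓ y = x ⊓ z → y = z)
    (hja : ∀ y z : L, (x ⊔ a) ⊔ y = (x ⊔ a) ⊔ z → (x ⊔ a) ⊓ y = (x ⊔ a) ⊓ z → y = z) :
    ∀ y z : L, x ⊔ y = x ⊔ z → x ⊓ y = x ⊓ z → y = z := by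
  -- helper: for u with ¬ a ≤ u, a ⊓ u = ⊥
  have hbot : ∀ u : L, ¬ a ≤ u → a ⊓ u = ⊥ := fun u hu =>
    hatom.2 _ (lt_of_le_of_ne inf_le_left (fun h => hu (inf_eq_left.mp h)))
  -- helper: contradiction in mixed case
  have hmix : ∀ u v : L, a ≤ u ⊔ v → ¬ a ≤ u → ¬ a ≤ v → False := by
    intro u v hle hu hv
    have h := hneutral u v
    rw [hbot u hu, inf_comm v a, hbot v hv, bot_sup_eq, sup_bot_eq] at h
    have ha : a ≤ u ⊓ v := by
      rw [← h]
      exact le_inf (le_inf le_sup_left hle) le_sup_right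
    exact hu (ha.trans inf_le_left)
  intro y z hj hm
  by_cases hax : a ≤ x
  · have hx : x ⊔ a = x := sup_eq_left.mpr hax
    exact hja y z (by rw [hx]; exact hj) (by rw [hx]; exact hm)
  · by_cases hay : a ≤ y
    · by_cases haz : a ≤ z
      · exact habove y z hay haz hj hm
      · exact (hmix x z (hj ▸ (hay.trans le_sup_right : a ≤ x ⊔ y)) hax haz).elim
    · by_cases haz : a ≤ z
      · exact (hmix x y (hj ▸ (haz.trans le_sup_right : a ≤ x ⊔ z)) hax hay).elim
      · -- neither above a: show (x ⊔ a) ⊓ w = x ⊓ w for w = y, z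
        have key : ∀ w : L, ¬ a ≤ w → (x ⊔ a) ⊓ w = x ⊓ w := by
          intro w hw
          have h := hneutral w x
          rw [hbot w hw, inf_comm x a, hbot x hax, bot_sup_eq, sup_bot_eq] at h
          have hle : w ≤ (a ⊔ w) ⊓ (w ⊔ x) := le_inf le_sup_right le_sup_left
          calc (x ⊔ a) ⊓ w = ((a ⊔ w) ⊓ (w ⊔ x) ⊓ (x ⊔ a)) ⊓ w := by
                rw [inf_assoc]
                exact (inf_eq_right.mpr (inf_le_right.trans hle)).symm
              _ = (w ⊓ x) ⊓ w := by rw [h]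
              _ = x ⊓ w := by rw [inf_comm w x, inf_assoc, inf_idem]
        have hj' : (x ⊔ a) ⊔ y = (x ⊔ a) ⊔ z := by
          rw [sup_right_comm, hj, sup_right_comm]
        exact hja y z hj' (by rw [key y hay, key z haz, hm])
end

section
/- Let S be an epigroup and x ∈ S. If S satisfies x² = x^p · x̄^q for some integers p ≥ 0 and q ≥ 1 with p ≤ q, then x² = x^ω · x̄^(q−p), and in particular x² is a group element of S. -/
/-- `spow x n = x ^ (n + 1)`: positive powers in a semigroup. -/
def spow {S : Type*} [Semigroup S] (x : S) : ℕ → S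
  | 0 => x
  | n + 1 => spow x n * x

/-- `x` lies in a subgroup of `S` whose identity element is `e`. -/
def IsInSubgroupWithUnit {S : Type*} [Semigroup S] (e x : S) : Prop :=
  e * e = e ∧ x * e = x ∧ e * x = x ∧
    ∃ y : S, x * y = e ∧ y * x = e ∧ e * y = y ∧ y * e = y

/-- `x` is a group element: it lies in some subgroup of `S`. -/
def IsGroupElement {S : Type*} [Semigroup S] (x : S) : Prop :=
  ∃ e : S, IsInSubgroupWithUnit e x

/-- An epigroup: a semigroup equipped with the pseudoinversion operation.
`pinv x` is the pseudoinverse of `x`; the axioms are Shevrin's characterization: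
`x x̄ = x̄ x`, `x̄ x x̄ = x̄`, and `x^ω = x x̄` absorbs some power of `x`
(equivalently, some power of `x` lies in a subgroup with unit `x x̄`). -/
class Epigroup (S : Type*) extends Semigroup S where
  pinv : S → S
  mul_pinv_comm : ∀ x : S, x * pinv x = pinv x * x
  pinv_mul_pinv : ∀ x : S, pinv x * x * pinv x = pinv x
  pow_absorb : ∀ x : S, ∃ n : ℕ, spow x n * (x * pinv x) = spow x n

open Epigroup

/-- `npowMul x p y = x ^ p * y`, where `x ^ 0 * y` is interpreted as `y`. -/
def npowMul {S : Type*} [Semigroup S] (x : S) : ℕ → S → S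
  | 0, y => y
  | p + 1, y => x * npowMul x p y

/-- `mulNpow y x p = y * x ^ p`, where `y * x ^ 0` is interpreted as `y`. -/
def mulNpow {S : Type*} [Semigroup S] (y x : S) : ℕ → S
  | 0 => y
  | p + 1 => mulNpow y x p * x

section Aux

variable {S : Type*} [Semigroup S]

lemma spow_succ' (y : S) (k : ℕ) : spow y (k + 1) = y * spow y k := by
  induction k with
  | zero => rfl
  | succ k ih =>
    show spow y (k + 1) * y = y * (spow y k * y)
    rw [ih, mul_assoc]

lemma npowMul_shift (x : S) (p : ℕ) (y : S) :
    npowMul x (p + 1) y = npowMul x p (x * y) := by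
  induction p generalizing y with
  | zero => rfl
  | succ p ih =>
    show x * npowMul x (p + 1) y = x * npowMul x p (x * y)
    rw [ih]

lemma subgroup_mul {e a c : S} (ha : IsInSubgroupWithUnit e a)
    (hc : IsInSubgroupWithUnit e c) : IsInSubgroupWithUnit e (a * c) := by
  obtain ⟨hee, hae, hea, ya, haya, hyaa, heya, hyae⟩ := ha
  obtain ⟨-, hce, hec, yc, hcyc, hycc, heyc, hyce⟩ := hc
  refine ⟨hee, ?_, ?_, yc * ya, ?_, ?_, ?_, ?_⟩
  · rw [mul_assoc, hce]
  · rw [← mul_assoc, hea]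
  · rw [mul_assoc, ← mul_assoc c, hcyc, heya, haya]
  · rw [mul_assoc, ← mul_assoc ya, hyaa, hec, hycc]
  · rw [← mul_assoc, heyc]
  · rw [mul_assoc, hyae]

end Aux

section EpiAux

variable {S : Type*} [Epigroup S] (x : S)

lemma epi_eb : (x * pinv x) * pinv x = pinv x := by
  rw [mul_pinv_comm]; exact pinv_mul_pinv x

lemma epi_be : pinv x * (x * pinv x) = pinv x := by
  rw [← mul_assoc]; exact pinv_mul_pinv x

lemma epi_ee : (x * pinv x) * (x * pinv x) = x * pinv x := by
  rw [mul_assoc, epi_be]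

lemma epi_ex : (x * pinv x) * x = x * (x * pinv x) := by
  rw [mul_assoc, ← mul_pinv_comm]

lemma epi_e_spow (k : ℕ) : (x * pinv x) * spow (pinv x) k = spow (pinv x) k := by
  induction k with
  | zero => exact epi_eb x
  | succ k ih =>
    show (x * pinv x) * (spow (pinv x) k * pinv x) = spow (pinv x) k * pinv x
    rw [← mul_assoc, ih]

lemma epi_x_spow (k : ℕ) : x * spow (pinv x) (k + 1) = spow (pinv x) k := by
  rw [spow_succ', ← mul_assoc, epi_e_spow]

lemma epi_D (p : ℕ) : npowMul x (p + 1) (spow (pinv x) p) = x * pinv x := by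
  induction p with
  | zero => rfl
  | succ p ih =>
    rw [npowMul_shift, epi_x_spow]
    exact ih

lemma epi_E (p k : ℕ) :
    npowMul x (p + 1) (spow (pinv x) (p + 1 + k)) = spow (pinv x) k := by
  induction p with
  | zero =>
    have h0 : 0 + 1 + k = k + 1 := by omega
    rw [h0]
    exact epi_x_spow x k
  | succ p ih =>
    rw [npowMul_shift]
    have h1 : p + 1 + 1 + k = (p + 1 + k) + 1 := by omega
    rw [h1, epi_x_spow]
    exact ih

lemma epi_mulNpow (k : ℕ) :
    mulNpow (x * pinv x) (pinv x) (k + 1) = spow (pinv x) k := by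
  induction k with
  | zero => exact epi_eb x
  | succ k ih =>
    show mulNpow (x * pinv x) (pinv x) (k + 1) * pinv x = spow (pinv x) k * pinv x
    rw [ih]

lemma epi_sub_e : IsInSubgroupWithUnit (x * pinv x) (x * pinv x) :=
  ⟨epi_ee x, epi_ee x, epi_ee x, x * pinv x, epi_ee x, epi_ee x, epi_ee x, epi_ee x⟩

lemma epi_sub_b : IsInSubgroupWithUnit (x * pinv x) (pinv x) := by
  refine ⟨epi_ee x, epi_be x, epi_eb x, x * (x * pinv x), ?_, ?_, ?_, ?_⟩
  · rw [← mul_assoc, ← mul_pinv_comm, epi_ee]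
  · rw [mul_assoc, epi_eb]
  · rw [← mul_assoc, epi_ex, mul_assoc, epi_ee]
  · rw [mul_assoc, epi_ee]

lemma epi_sub_mulNpow (k : ℕ) :
    IsInSubgroupWithUnit (x * pinv x) (mulNpow (x * pinv x) (pinv x) k) := by
  induction k with
  | zero => exact epi_sub_e x
  | succ k ih => exact subgroup_mul ih (epi_sub_b x)

end EpiAux

/-- If `x² = x^p·x̄^q` with `0 ≤ p ≤ q`, `q ≥ 1`, then `x² = x^ω·x̄^(q-p)` and `x²`
is a group element. -/
theorem sq_eq_omega_pinv_pow {S : Type*} [Epigroup S] (x : S) (p q : ℕ)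
    (hq : 1 ≤ q) (hpq : p ≤ q)
    (h : x * x = npowMul x p (spow (pinv x) (q - 1))) :
    x * x = mulNpow (x * pinv x) (pinv x) (q - p) ∧ IsGroupElement (x * x) := by
  obtain ⟨q', rfl⟩ : ∃ q', q = q' + 1 := ⟨q - 1, (Nat.succ_pred_eq_of_pos hq).symm⟩
  simp only [Nat.add_sub_cancel] at h
  have key : x * x = mulNpow (x * pinv x) (pinv x) (q' + 1 - p) := by
    match p, hpq with
    | 0, _ =>
      rw [h, Nat.sub_zero, epi_mulNpow]
      rfl
    | p' + 1, hpq =>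
      rcases Nat.lt_or_ge p' q' with hlt | hge
      · obtain ⟨k, rfl⟩ : ∃ k, q' = p' + 1 + k := ⟨q' - p' - 1, by omega⟩
        have h2 : p' + 1 + k + 1 - (p' + 1) = k + 1 := by omega
        rw [h2, h, epi_E, epi_mulNpow]
      · have hpq' : p' = q' := le_antisymm (by omega) hge
        subst hpq'
        have h3 : p' + 1 - (p' + 1) = 0 := by omega
        rw [h3, h, epi_D]
        rfl
  exact ⟨key, x * pinv x, key ▸ epi_sub_mulNpow x (q' + 1 - p)⟩
end

section
/- Let L be a lattice with 0, a an atom and neutral element of L, and x a cancellable element of L. Then x ⊓ a ∈ {0, a}, and in either case x ⊔ a is cancellable. -/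
/-- For a neutral atom `a` and a cancellable element `x`, `x ⊓ a ∈ {0, a}` and
`x ⊔ a` is cancellable. -/
theorem meet_atom_and_join_cancellable {L : Type*} [Lattice L] [OrderBot L] (a : L)
    (hatom : IsAtom a)
    (hneutral : ∀ y z : L,
      (a ⊔ y) ⊓ (y ⊔ z) ⊓ (z ⊔ a) = (a ⊓ y) ⊔ (y ⊓ z) ⊔ (z ⊓ a))
    (x : L)
    (hcanc : ∀ y z : L, x ⊔ y = x ⊔ z → x ⊓ y = x ⊓ z → y = z) :
    (x ⊓ a = ⊥ ∨ x ⊓ a = a) ∧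
      (∀ y z : L, (x ⊔ a) ⊔ y = (x ⊔ a) ⊔ z → (x ⊔ a) ⊓ y = (x ⊔ a) ⊓ z → y = z) := by
  -- atom fact
  have hbot : ∀ v : L, a ⊓ v = ⊥ ∨ a ⊓ v = a := by
    intro v
    rcases (inf_le_left : a ⊓ v ≤ a).lt_or_eq with h | h
    · exact Or.inl (hatom.2 _ h)
    · exact Or.inr h
  -- `a` is cancellable
  have hC : ∀ y z : L, a ⊔ y = a ⊔ z → a ⊓ y = a ⊓ z → y = z := by
    intro y z hj hm
    have hy : y = (a ⊔ y) ⊓ (y ⊔ z) ⊓ (z ⊔ a) := by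
      apply le_antisymm
      · refine le_inf (le_inf le_sup_right le_sup_left) ?_
        rw [sup_comm z a, ← hj]
        exact le_sup_right
      · rw [hneutral y z]
        refine sup_le (sup_le inf_le_right inf_le_left) ?_
        rw [inf_comm z a, ← hm]
        exact inf_le_right
    have hz : z = (a ⊔ y) ⊓ (y ⊔ z) ⊓ (z ⊔ a) := by
      apply le_antisymm
      · exact le_inf (le_inf (hj ▸ le_sup_right) le_sup_right) le_sup_left
      · rw [hneutral y z]
        refine sup_le (sup_le ?_ inf_le_right) inf_le_left
        rw [hm]
        exact inf_le_right
    exact hy.trans hz.symm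
  -- atom "primality"
  have hA : ∀ u v : L, a ≤ u ⊔ v → a ≤ u ∨ a ≤ v := by
    intro u v h
    by_contra hc
    push_neg at hc
    obtain ⟨hu, hv⟩ := hc
    have hu' : a ⊓ u = ⊥ :=
      (hbot u).resolve_right fun he => hu (he.symm.le.trans inf_le_right)
    have hv' : a ⊓ v = ⊥ :=
      (hbot v).resolve_right fun he => hv (he.symm.le.trans inf_le_right)
    have key := hneutral u v
    rw [hu', inf_comm v a, hv', bot_sup_eq, sup_bot_eq] at key
    have : a ≤ u ⊓ v := by
      rw [← key]
      exact le_inf (le_inf le_sup_left h) le_sup_right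
    exact hu (this.trans inf_le_left)
  -- distributivity at `a`
  have hD : ∀ u v : L, (u ⊔ a) ⊓ v = (u ⊓ v) ⊔ (a ⊓ v) := by
    intro u v
    rcases hbot v with hv | hv
    · rcases hbot u with hu | hu
      · -- a ⊓ u = ⊥, a ⊓ v = ⊥
        have key := hneutral u v
        rw [hu, inf_comm v a, hv, bot_sup_eq, sup_bot_eq] at key
        rw [hv, sup_bot_eq]
        apply le_antisymm
        · rw [← key]
          refine le_inf (le_inf ?_ ?_) ?_
          · exact inf_le_left.trans (sup_le le_sup_right le_sup_left)
          · exact inf_le_right.trans le_sup_right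
          · exact inf_le_right.trans le_sup_left
        · exact le_inf (inf_le_left.trans le_sup_left) inf_le_right
      · -- a ≤ u
        have hau : a ≤ u := hu.symm.le.trans inf_le_right
        rw [hv, sup_bot_eq, sup_eq_left.mpr hau]
    · -- a ≤ v
      have hav : a ≤ v := hv.symm.le.trans inf_le_right
      have key := hneutral u v
      rw [sup_eq_left.mpr hav, inf_comm v a, hv] at key
      have lhs_eq : (a ⊔ u) ⊓ (u ⊔ v) ⊓ v = (a ⊔ u) ⊓ v := by
        rw [inf_assoc]
        congr 1
        exact inf_eq_right.mpr le_sup_right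
      rw [lhs_eq] at key
      rw [hv, sup_comm u a, key]
      apply le_antisymm
      · exact sup_le (sup_le (inf_le_left.trans le_sup_right) le_sup_left) le_sup_right
      · exact sup_le (le_sup_right.trans le_sup_left) le_sup_right
  constructor
  · rcases hbot x with h | h
    · left; rw [inf_comm]; exact h
    · right; rw [inf_comm]; exact h
  · intro y z hj hm
    -- step 1 : a ⊓ y = a ⊓ z
    have hstep : ∀ w₁ w₂ : L, (x ⊔ a) ⊓ w₁ = (x ⊔ a) ⊓ w₂ → a ≤ w₁ → a ≤ w₂ := by
      intro w₁ w₂ h hw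
      have : a ≤ (x ⊔ a) ⊓ w₁ := le_inf le_sup_right hw
      rw [h] at this
      exact this.trans inf_le_right
    have h1 : a ⊓ y = a ⊓ z := by
      rcases hbot y with hy | hy <;> rcases hbot z with hz | hz
      · rw [hy, hz]
      · exfalso
        have : a ≤ y := hstep z y hm.symm (hz.symm.le.trans inf_le_right)
        exact hatom.1 (by rw [← hy, inf_eq_left.mpr this])
      · exfalso
        have : a ≤ z := hstep y z hm (hy.symm.le.trans inf_le_right)
        exact hatom.1 (by rw [← hz, inf_eq_left.mpr this])
      · rw [hy, hz]
    -- step 2 : x ⊓ y = x ⊓ z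
    have hm' : (x ⊓ y) ⊔ (a ⊓ y) = (x ⊓ z) ⊔ (a ⊓ z) := by
      rw [← hD x y, ← hD x z]; exact hm
    have h2 : x ⊓ y = x ⊓ z := by
      rcases hbot y with hy | hy
      · have hz : a ⊓ z = ⊥ := by rw [← h1]; exact hy
        rwa [hy, hz, sup_bot_eq, sup_bot_eq] at hm'
      · have hay : a ≤ y := hy.symm.le.trans inf_le_right
        have haz : a ≤ z := hstep y z hm hay
        have hz : a ⊓ z = a := inf_eq_left.mpr haz
        apply hC (x ⊓ y) (x ⊓ z)
        · rw [sup_comm a (x ⊓ y), sup_comm a (x ⊓ z), ← hy, hm']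
          congr 1
          rw [hy, hz]
        · have e1 : a ⊓ (x ⊓ y) = a ⊓ x := by
            apply le_antisymm
            · exact inf_le_inf_left a inf_le_left
            · exact le_inf inf_le_left (le_inf inf_le_right (inf_le_left.trans hay))
          have e2 : a ⊓ (x ⊓ z) = a ⊓ x := by
            apply le_antisymm
            · exact inf_le_inf_left a inf_le_left
            · exact le_inf inf_le_left (le_inf inf_le_right (inf_le_left.trans haz))
          rw [e1, e2]
    -- step 3 : x ⊓ (a ⊔ y) = x ⊓ (a ⊔ z)
    have h3 : x ⊓ (a ⊔ y) = x ⊓ (a ⊔ z) := by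
      rw [inf_comm x (a ⊔ y), inf_comm x (a ⊔ z), sup_comm a y, sup_comm a z,
        hD y x, hD z x, inf_comm y x, inf_comm z x, h2]
    -- step 4 : a ⊔ y = a ⊔ z by x-cancellability
    have h4 : a ⊔ y = a ⊔ z := by
      apply hcanc
      · rw [← sup_assoc, ← sup_assoc]; exact hj
      · exact h3
    exact hC y z h4 h1
end
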